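/- Let X• be a simplicial space which is simplicially NDR. Then for 0 ≤ r ≤ n − 1 there is a homeomorphism γ(n,r) : ⋁_J ŝ_J(X_{n−r}) → S^r(X_n)/S^{r+1}(X_n), natural for morphisms of simplicial spaces, where J ranges over the admissible sequences J = (j_r, j_{r−1}, …, j_1) with |J| = r (and where S^n(X_n) = s_0^n(X_0)). -/

import Mathlib

universe u v

/-- An NDR pair `(Z, A)`, in the sense of May. -/
def IsNDRPair {Z : Type u} [TopologicalSpace Z] (A : Set Z) : Prop :=
  ∃ (u : C(Z, unitInterval)) (h : C(Z × unitInterval, Z)),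
    A = u ⁻¹' {0} ∧ (∀ z, h (z, 0) = z) ∧ (∀ a ∈ A, ∀ t, h (a, t) ∈ A) ∧
    ∀ z, u z < 1 → h (z, 1) ∈ A

/-- A strong NDR pair `(Z, A)`, in the sense of May. -/
def IsStrongNDRPair {Z : Type u} [TopologicalSpace Z] (A : Set Z) : Prop :=
  ∃ (u : C(Z, unitInterval)) (h : C(Z × unitInterval, Z)),
    A = u ⁻¹' {0} ∧ (∀ z, h (z, 0) = z) ∧ (∀ a ∈ A, ∀ t, h (a, t) ∈ A) ∧
    (∀ z, u z < 1 → h (z, 1) ∈ A) ∧ ∀ z t, u z < 1 → u (h (z, t)) < 1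

/-- A cofibration: a map having the homotopy extension property with respect to all spaces. -/
def IsCofibration {A X : Type u} [TopologicalSpace A] [TopologicalSpace X] (i : C(A, X)) : Prop :=
  ∀ (Z : Type u) [TopologicalSpace Z] (f : C(X, Z)) (H : C(A × unitInterval, Z)),
    (∀ a, H (a, 0) = f (i a)) →
    ∃ G : C(X × unitInterval, Z), (∀ x, G (x, 0) = f x) ∧ ∀ a t, G (i a, t) = H (a, t)

/-- `f` is a homotopy equivalence. -/
def IsHtpyEquiv {A : Type u} {B : Type v} [TopologicalSpace A] [TopologicalSpace B]
    (f : C(A, B)) : Prop :=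
  ∃ g : C(B, A), (g.comp f).Homotopic (ContinuousMap.id A) ∧
    (f.comp g).Homotopic (ContinuousMap.id B)

/-- A pointed topological space. -/
structure PSpace : Type (u + 1) where
  carrier : Type u
  top : TopologicalSpace carrier
  pt : carrier

attribute [instance] PSpace.top

/-- Points of `Z ⊕ *` which get identified when collapsing `A ⊆ Z`. -/
def collapseGood {Z : Type u} (A : Set Z) : Z ⊕ Unit → Prop :=
  Sum.elim (· ∈ A) fun _ => True

/-- The setoid on `Z ⊕ *` which identifies all points of `A` with the added point. -/
def collapseSetoid {Z : Type u} (A : Set Z) : Setoid (Z ⊕ Unit) where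
  r x y := x = y ∨ (collapseGood A x ∧ collapseGood A y)
  iseqv := by
    constructor
    · exact fun x => Or.inl rfl
    · rintro x y (rfl | ⟨h1, h2⟩)
      · exact Or.inl rfl
      · exact Or.inr ⟨h2, h1⟩
    · rintro x y z (rfl | ⟨h1, h2⟩) h
      · exact h
      · rcases h with rfl | ⟨h3, h4⟩
        · exact Or.inr ⟨h1, h2⟩
        · exact Or.inr ⟨h1, h4⟩

/-- The pointed quotient `Z/A`: the quotient of `Z ⊔ *` identifying all of `A ∪ {*}` to a
single point, which serves as basepoint.  (When `A = ∅` this is `Z` with a disjoint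
basepoint added.) -/
def Collapse {Z : Type u} [TopologicalSpace Z] (A : Set Z) : PSpace.{u} where
  carrier := Quotient (collapseSetoid A)
  top := instTopologicalSpaceQuotient
  pt := Quotient.mk _ (Sum.inr ())

/-- The canonical map `Z → Z/A`. -/
def Collapse.mk {Z : Type u} [TopologicalSpace Z] (A : Set Z) (z : Z) : (Collapse A).carrier :=
  Quotient.mk _ (Sum.inl z)

/-- `Z` with a disjoint basepoint added. -/
def plusP (Z : Type u) [TopologicalSpace Z] : PSpace.{u} := Collapse (∅ : Set Z)

/-- The reduced suspension of a pointed space. -/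
def Susp (P : PSpace.{u}) : PSpace.{u} :=
  Collapse {q : P.carrier × unitInterval | q.2 = 0 ∨ q.2 = 1 ∨ q.1 = P.pt}

/-- The canonical map `P × [0,1] → Σ P`. -/
def Susp.mk (P : PSpace.{u}) (z : P.carrier) (t : unitInterval) : (Susp P).carrier :=
  Collapse.mk _ (z, t)

/-- The wedge (one point union) of a family of pointed spaces. -/
def Wedge {ι : Type v} (P : ι → PSpace.{u}) : PSpace.{max u v} :=
  Collapse {x : Σ i, (P i).carrier | x.2 = (P x.1).pt}

/-- The canonical map from a summand into the wedge. -/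
def Wedge.mk {ι : Type v} (P : ι → PSpace.{u}) (i : ι) (z : (P i).carrier) :
    (Wedge P).carrier :=
  Collapse.mk _ ⟨i, z⟩

/-- `G` is the map of suspensions induced by the pointed map `g`. -/
def SuspExtends {P Q : PSpace.{u}} (g : P.carrier → Q.carrier)
    (G : (Susp P).carrier → (Susp Q).carrier) : Prop :=
  (∀ z t, G (Susp.mk P z t) = Susp.mk Q (g z) t) ∧ G (Susp P).pt = (Susp Q).pt

/-- `G` is the map of `j`-fold suspensions induced by the map `g`. -/
def SuspIterExtends : (j : ℕ) → (P Q : PSpace.{u}) → (P.carrier → Q.carrier) →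
    ((Susp^[j] P).carrier → (Susp^[j] Q).carrier) → Prop
  | 0, _, _, g, G => G = g
  | j + 1, P, Q, g, G =>
      ∃ g' : (Susp P).carrier → (Susp Q).carrier,
        SuspExtends g g' ∧ SuspIterExtends j (Susp P) (Susp Q) g' G

/-- `G` is the map of wedges induced by the family of maps `g i`. -/
def WedgeInduced {ι : Type v} (P Q : ι → PSpace.{u}) (g : ∀ i, (P i).carrier → (Q i).carrier)
    (G : (Wedge P).carrier → (Wedge Q).carrier) : Prop :=
  (∀ i z, G (Wedge.mk P i z) = Wedge.mk Q i (g i z)) ∧ G (Wedge P).pt = (Wedge Q).pt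

/-- `g` is the map of collapses induced by `f : Z → W`. -/
def CollapseInduced {Z : Type u} {W : Type v} [TopologicalSpace Z] [TopologicalSpace W]
    (A : Set Z) (B : Set W) (f : Z → W)
    (g : (Collapse A).carrier → (Collapse B).carrier) : Prop :=
  (∀ z, g (Collapse.mk A z) = Collapse.mk B (f z)) ∧ g (Collapse A).pt = (Collapse B).pt

/-- A simplicial space: a sequence of topological spaces with continuous face and
degeneracy maps satisfying the simplicial identities.  The maps `d n i : X (n+1) → X n`
and `s n i : X n → X (n+1)` carry ℕ-valued indices; only the values with
`i ≤ n + 1` (resp. `i ≤ n`) are meaningful, and the simplicial identities are imposed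
exactly in that range. -/
structure SimplicialSpace : Type (u + 1) where
  X : ℕ → Type u
  top : ∀ n, TopologicalSpace (X n)
  d : ∀ n, ℕ → X (n + 1) → X n
  s : ∀ n, ℕ → X n → X (n + 1)
  continuous_d : ∀ n i, Continuous (d n i)
  continuous_s : ∀ n i, Continuous (s n i)
  dd : ∀ n i j, i < j → j ≤ n + 2 → ∀ x, d n i (d (n + 1) j x) = d n (j - 1) (d (n + 1) i x)
  ss : ∀ n i j, i ≤ j → j ≤ n → ∀ x, s (n + 1) i (s n j x) = s (n + 1) (j + 1) (s n i x)
  ds_lt : ∀ n i j, i < j → j ≤ n + 1 → ∀ x,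
    d (n + 1) i (s (n + 1) j x) = s n (j - 1) (d n i x)
  ds_eq : ∀ n j, j ≤ n → ∀ x, d n j (s n j x) = x
  ds_eq' : ∀ n j, j ≤ n → ∀ x, d n (j + 1) (s n j x) = x
  ds_gt : ∀ n i j, j + 1 < i → i ≤ n + 2 → ∀ x,
    d (n + 1) i (s (n + 1) j x) = s n j (d n (i - 1) x)

attribute [instance] SimplicialSpace.top

namespace SimplicialSpace

/-- A morphism of simplicial spaces. -/
structure Hom (X Y : SimplicialSpace.{u}) : Type u where
  f : ∀ n, X.X n → Y.X n
  continuous_f : ∀ n, Continuous (f n)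
  comm_d : ∀ n i, i ≤ n + 1 → ∀ x, f n (X.d n i x) = Y.d n i (f (n + 1) x)
  comm_s : ∀ n i, i ≤ n → ∀ x, f (n + 1) (X.s n i x) = Y.s n i (f n x)

/-- For a sequence `I = (i_r, …, i_1)` (as the list `[i_r, …, i_1]`), the composite
degeneracy `s_I = s_{i_r} ∘ ⋯ ∘ s_{i_1} : X_m → X_{m + r}`. -/
def sComp (X : SimplicialSpace.{u}) : (I : List ℕ) → (m : ℕ) → X.X m → X.X (m + I.length)
  | [], _, y => y
  | i :: I', m, y => X.s (m + I'.length) i (sComp X I' m y)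

/-- For a sequence `I = (i_r, …, i_1)` (as the list `[i_r, …, i_1]`), the composite
face map `d_{χ(I)} = d_{i_1} ∘ d_{i_2} ∘ ⋯ ∘ d_{i_r} : X_{m+r} → X_m` (so `d_{i_r}` is
applied first). -/
def dComp (X : SimplicialSpace.{u}) : (I : List ℕ) → (m : ℕ) → X.X (m + I.length) → X.X m
  | [], _, x => x
  | i :: I', m, x => dComp X I' m (X.d (m + I'.length) i x)

/-- The sequence `I = (i_r, …, i_1)` consists of indices which are in range for the
composite degeneracy `s_I : X_m → X_{m+r}`. -/
def ValidSeq : List ℕ → ℕ → Prop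
  | [], _ => True
  | i :: I', m => i ≤ m + I'.length ∧ ValidSeq I' m

/-- The decreasing degeneracy filtration: `filtS X t n` is the subspace
`S^t(X_n) ⊆ X_n`, the union of the images of all `t`-fold composites of degeneracy
maps.  (`S^0(X_n) = X_n`.) -/
def filtS (X : SimplicialSpace.{u}) : (t : ℕ) → (n : ℕ) → Set (X.X n)
  | 0, _ => Set.univ
  | t + 1, n => {x | ∃ (m : ℕ) (hm : m + 1 = n) (i : ℕ), i ≤ m ∧
      ∃ y ∈ filtS X t m, cast (congrArg X.X hm) (X.s m i y) = x}

lemma filtS_succ_subset (X : SimplicialSpace.{u}) :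
    ∀ (t n : ℕ), X.filtS (t + 1) n ⊆ X.filtS t n := by
  intro t
  induction t with
  | zero => intro n x _; exact Set.mem_univ x
  | succ t ih =>
      rintro n x ⟨m, rfl, i, hi, y, hy, rfl⟩
      exact ⟨m, rfl, i, hi, y, ih m hy, rfl⟩

lemma filtS_antitone (X : SimplicialSpace.{u}) {t t' : ℕ} (h : t ≤ t') (n : ℕ) :
    X.filtS t' n ⊆ X.filtS t n := by
  induction h with
  | refl => exact fun x hx => hx
  | step _ ih => exact fun x hx => ih (X.filtS_succ_subset _ n hx)

end SimplicialSpace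
namespace SimplicialSpace

/-- The composite degeneracy `s_I`, regarded as a map `X_{n - r} → X_n` where `r = |I|`. -/
def sFromTo (X : SimplicialSpace.{u}) (I : List ℕ) (n : ℕ) (h : I.length ≤ n) :
    X.X (n - I.length) → X.X n :=
  fun y => cast (congrArg X.X (Nat.sub_add_cancel h)) (X.sComp I (n - I.length) y)

/-- The composite face map `d_{χ(I)}`, regarded as a map `X_n → X_{n - r}` where `r = |I|`. -/
def dFromTo (X : SimplicialSpace.{u}) (I : List ℕ) (n : ℕ) (h : I.length ≤ n) :
    X.X n → X.X (n - I.length) :=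
  fun x => X.dComp I (n - I.length) (cast (congrArg X.X (Nat.sub_add_cancel h).symm) x)

/-- The image `s_I(X_{n-r}) ⊆ X_n`. -/
def sImage (X : SimplicialSpace.{u}) (I : List ℕ) (n : ℕ) (h : I.length ≤ n) : Set (X.X n) :=
  Set.range (X.sFromTo I n h)

/-- The pointed space `ŝ_I(X_{n-r}) = s_I(X_{n-r}) / s_I S(X_{n-r})`. -/
def sHat (X : SimplicialSpace.{u}) (I : List ℕ) (n : ℕ) (h : I.length ≤ n) : PSpace.{u} :=
  Collapse {x : ↥(X.sImage I n h) |
    (x : X.X n) ∈ X.sFromTo I n h '' X.filtS 1 (n - I.length)}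

/-- The pointed filtration quotient `S^r(X_n)/S^{r+1}(X_n)`. -/
def filtQuot (X : SimplicialSpace.{u}) (n r : ℕ) : PSpace.{u} :=
  Collapse {x : ↥(X.filtS r n) | (x : X.X n) ∈ X.filtS (r + 1) n}

/-- `X` is simplicially NDR: each pair `(S^t(X_n), S^{t+1}(X_n))` is an NDR pair. -/
def SimpliciallyNDR (X : SimplicialSpace.{u}) : Prop :=
  ∀ n t, IsNDRPair {x : ↥(X.filtS t n) | (x : X.X n) ∈ X.filtS (t + 1) n}

/-- `X` is proper: each pair `(X_n, S(X_n))` is a strong NDR pair. -/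
def Proper (X : SimplicialSpace.{u}) : Prop := ∀ n, IsStrongNDRPair (X.filtS 1 n)

/-- `g` is the map `S^r(X_n)/S^{r+1}(X_n) → S^r(Y_n)/S^{r+1}(Y_n)` induced by the
morphism `f : X → Y` of simplicial spaces. -/
def FiltQuotInduced {X Y : SimplicialSpace.{u}} (f : X.Hom Y) (n r : ℕ)
    (g : (X.filtQuot n r).carrier → (Y.filtQuot n r).carrier) : Prop :=
  (∀ (x : X.X n) (hx : x ∈ X.filtS r n) (hfx : f.f n x ∈ Y.filtS r n),
      g (Collapse.mk _ ⟨x, hx⟩) = Collapse.mk _ ⟨f.f n x, hfx⟩) ∧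
  g (X.filtQuot n r).pt = (Y.filtQuot n r).pt

/-- `g` is the map `ŝ_I(X_{n-r}) → ŝ_I(Y_{n-r})` induced by the morphism `f : X → Y`. -/
def SHatInduced {X Y : SimplicialSpace.{u}} (f : X.Hom Y) (I : List ℕ) (n : ℕ)
    (h : I.length ≤ n)
    (g : (X.sHat I n h).carrier → (Y.sHat I n h).carrier) : Prop :=
  (∀ y : X.X (n - I.length),
      g (Collapse.mk _ ⟨X.sFromTo I n h y, Set.mem_range_self y⟩) =
        Collapse.mk _ ⟨Y.sFromTo I n h (f.f (n - I.length) y), Set.mem_range_self _⟩) ∧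
  g (X.sHat I n h).pt = (Y.sHat I n h).pt

end SimplicialSpace

/-- Admissible sequences `(j_r > j_{r-1} > ⋯ > j_1)` of length `r` with entries `< b`,
encoded as strictly decreasing lists. -/
def AdmSeq (r b : ℕ) : Type :=
  {J : List ℕ // J.length = r ∧ J.Pairwise (· > ·) ∧ ∀ i ∈ J, i < b}

/-- Strict lexicographic order on sequences of equal length (comparing from the left,
i.e. at the largest entries first): `I < J` iff they agree above position `p` and
`i_p < j_p`. -/
def SeqLexLT : List ℕ → List ℕ → Prop
  | _, [] => False
  | [], _ :: _ => False
  | i :: I', j :: J' => i < j ∨ (i = j ∧ SeqLexLT I' J')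
namespace SimplexCategory

/-- The old Mathlib `SimplexCategory.toTopObj`: the topological simplex as a set of
`ℝ≥0`-valued weightings summing to `1`. -/
def toTopObj (x : SimplexCategory) : Set (Fin (x.len + 1) → NNReal) :=
  {f | ∑ i, f i = 1}

/-- The old Mathlib `SimplexCategory.toTopMap`. -/
def toTopMap {x y : SimplexCategory} (f : x ⟶ y) (g : x.toTopObj) : y.toTopObj :=
  ⟨fun i => ∑ j ∈ Finset.univ.filter (fun j => f j = i), g.1 j, by
    show ∑ i, ∑ j ∈ Finset.univ.filter (fun j => f j = i), g.1 j = 1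
    rw [Finset.sum_fiberwise]; exact g.2⟩

end SimplexCategory

/-- The topological standard `n`-simplex. -/
abbrev TopSimplex (n : ℕ) : Type :=
  ↥(SimplexCategory.toTopObj (SimplexCategory.mk n))

namespace SimplicialSpace

/-- The disjoint union `⊔ₙ Xₙ × Δⁿ` from which the geometric realization is formed. -/
def RealPre (X : SimplicialSpace.{u}) : Type u :=
  Σ n : ℕ, X.X n × TopSimplex n

instance (X : SimplicialSpace.{u}) : TopologicalSpace (RealPre X) := by
  unfold RealPre; infer_instance

/-- The identifications defining the geometric realization: `(d_i x, u) ∼ (x, δ^i u)`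
and `(s_i x, u) ∼ (x, σ^i u)`. -/
inductive RealRel (X : SimplicialSpace.{u}) : RealPre X → RealPre X → Prop
  | face (n i : ℕ) (hi : i ≤ n + 1) (x : X.X (n + 1)) (u : TopSimplex n) :
      RealRel X ⟨n, (X.d n i x, u)⟩
        ⟨n + 1, (x, SimplexCategory.toTopMap (SimplexCategory.δ ⟨i, by omega⟩) u)⟩
  | degen (n i : ℕ) (hi : i ≤ n) (x : X.X n) (u : TopSimplex (n + 1)) :
      RealRel X ⟨n + 1, (X.s n i x, u)⟩
        ⟨n, (x, SimplexCategory.toTopMap (SimplexCategory.σ ⟨i, by omega⟩) u)⟩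

/-- The geometric realization `|X|` of a simplicial space. -/
def Realization (X : SimplicialSpace.{u}) : Type u := Quot (RealRel X)

instance (X : SimplicialSpace.{u}) : TopologicalSpace (Realization X) := by
  unfold Realization; infer_instance

/-- The subset of `|X|` of points represented by simplices of dimension `< j`
(so `FleBelow X 0 = ∅` and `FleBelow X (j+1) = F_j|X|`). -/
def FleBelow (X : SimplicialSpace.{u}) (j : ℕ) : Set (Realization X) :=
  {q | ∃ (n : ℕ), n < j ∧ ∃ (x : X.X n) (u : TopSimplex n), q = Quot.mk _ ⟨n, (x, u)⟩}

/-- The skeletal filtration `F_j|X|` of the geometric realization. -/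
def Fle (X : SimplicialSpace.{u}) (j : ℕ) : Set (Realization X) := FleBelow X (j + 1)

/-- The pointed filtration quotient `F_j|X| / F_{j-1}|X|` (for `j = 0` this is
`F_0|X|` with a disjoint basepoint added). -/
def realQuot (X : SimplicialSpace.{u}) (j : ℕ) : PSpace.{u} :=
  Collapse {q : ↥(Fle X j) | (q : Realization X) ∈ FleBelow X j}

/-- `g` is the map `|X| → |Y|` induced by a morphism `f : X → Y` of simplicial spaces. -/
def RealMapInduced {X Y : SimplicialSpace.{u}} (f : X.Hom Y)
    (g : Realization X → Realization Y) : Prop :=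
  ∀ (n : ℕ) (x : X.X n) (u : TopSimplex n),
    g (Quot.mk _ ⟨n, (x, u)⟩) = Quot.mk _ ⟨n, (f.f n x, u)⟩

/-- `g` is the map `F_j|X|/F_{j-1}|X| → F_j|Y|/F_{j-1}|Y|` induced by a morphism
`f : X → Y` of simplicial spaces. -/
def RealQuotInduced {X Y : SimplicialSpace.{u}} (f : X.Hom Y) (j : ℕ)
    (g : (realQuot X j).carrier → (realQuot Y j).carrier) : Prop :=
  ∃ g0 : Realization X → Realization Y, RealMapInduced f g0 ∧
    ∃ hg0 : ∀ q ∈ Fle X j, g0 q ∈ Fle Y j,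
      (∀ (q : Realization X) (hq : q ∈ Fle X j),
        g (Collapse.mk _ ⟨q, hq⟩) = Collapse.mk _ ⟨g0 q, hg0 q hq⟩) ∧
      g (realQuot X j).pt = (realQuot Y j).pt

end SimplicialSpace

/-- The mapping cone of a map `f : A → X`: the quotient of `X ⊔ (A × [0,1])` obtained by
identifying `(a, 0)` with `f a` and collapsing `A × {1}` to a point. -/
inductive ConeRel {A X : Type u} [TopologicalSpace A] [TopologicalSpace X] (f : A → X) :
    (X ⊕ (A × unitInterval)) → (X ⊕ (A × unitInterval)) → Prop
  | glue (a : A) : ConeRel f (Sum.inr (a, 0)) (Sum.inl (f a))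
  | tip (a b : A) : ConeRel f (Sum.inr (a, 1)) (Sum.inr (b, 1))

/-- The mapping cone of `f : A → X`. -/
def MappingCone {A X : Type u} [TopologicalSpace A] [TopologicalSpace X] (f : A → X) :
    Type u :=
  Quot (ConeRel f)

instance {A X : Type u} [TopologicalSpace A] [TopologicalSpace X] (f : A → X) :
    TopologicalSpace (MappingCone f) := by
  unfold MappingCone; infer_instance
/-- An abstract simplicial complex on the vertex set `{1, …, m}` (encoded as `Fin m`):
a collection of finite subsets closed under taking subsets. -/
structure AbsSimplicialComplex (m : ℕ) : Type where
  faces : Set (Finset (Fin m))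
  down_closed : ∀ σ ∈ faces, ∀ τ ⊆ σ, τ ∈ faces

/-- The `n`-simplices of the simplicial set `Δ(K)`: weakly order-preserving
`(n+1)`-tuples of vertices whose underlying set is a simplex of `K`. -/
def DeltaObj {m : ℕ} (K : AbsSimplicialComplex m) (n : ℕ) : Type :=
  {v : Fin (n + 1) → Fin m // Monotone v ∧ Finset.image v Finset.univ ∈ K.faces}

/-- The coface index map `δ_i : [n] → [n+1]` (with out-of-range `i` clamped). -/
def dIdx (n i : ℕ) (k : Fin (n + 1)) : Fin (n + 2) :=
  ⟨if k.1 < i then k.1 else k.1 + 1, by have := k.isLt; split_ifs <;> omega⟩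

/-- The codegeneracy index map `σ_i : [n+1] → [n]` (with out-of-range `i` clamped). -/
def sIdx (n i : ℕ) (k : Fin (n + 2)) : Fin (n + 1) :=
  ⟨if k.1 ≤ min i n then k.1 else k.1 - 1, by
    have := k.isLt; have := Nat.min_le_right i n; split_ifs <;> omega⟩

/-- The simplicial set `Δ(K)` associated to an abstract simplicial complex `K`,
regarded as a simplicial space in which every space is discrete. -/
def DeltaK {m : ℕ} (K : AbsSimplicialComplex m) : SimplicialSpace.{0} where
  X n := DeltaObj K n
  top _ := ⊥
  d n i v := ⟨fun k => v.1 (dIdx n i k),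
    fun a b hab => v.2.1 (by
      simp only [dIdx, Fin.mk_le_mk]
      have := Fin.le_def.mp hab
      split_ifs <;> omega),
    K.down_closed _ v.2.2 _ (Finset.image_subset_iff.mpr fun k _ =>
      Finset.mem_image_of_mem _ (Finset.mem_univ _))⟩
  s n i v := ⟨fun k => v.1 (sIdx n i k),
    fun a b hab => v.2.1 (by
      simp only [sIdx, Fin.mk_le_mk]
      have := Fin.le_def.mp hab
      split_ifs <;> omega),
    K.down_closed _ v.2.2 _ (Finset.image_subset_iff.mpr fun k _ =>
      Finset.mem_image_of_mem _ (Finset.mem_univ _))⟩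
  continuous_d _ _ := continuous_bot
  continuous_s _ _ := continuous_bot
  dd n i j hij hj x := by
    apply Subtype.ext; funext k
    refine congrArg x.1 (Fin.ext ?_)
    simp [dIdx]
    have := k.isLt
    split_ifs <;> omega
  ss n i j hij hj x := by
    apply Subtype.ext; funext k
    refine congrArg x.1 (Fin.ext ?_)
    simp [sIdx]
    have := k.isLt
    split_ifs <;> omega
  ds_lt n i j hij hj x := by
    apply Subtype.ext; funext k
    refine congrArg x.1 (Fin.ext ?_)
    simp [dIdx, sIdx]
    have := k.isLt
    split_ifs <;> omega
  ds_eq n j hj x := by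
    apply Subtype.ext; funext k
    refine congrArg x.1 (Fin.ext ?_)
    simp [dIdx, sIdx]
    have := k.isLt
    split_ifs <;> omega
  ds_eq' n j hj x := by
    apply Subtype.ext; funext k
    refine congrArg x.1 (Fin.ext ?_)
    simp [dIdx, sIdx]
    have := k.isLt
    split_ifs <;> omega
  ds_gt n i j hij hi x := by
    apply Subtype.ext; funext k
    refine congrArg x.1 (Fin.ext ?_)
    simp [dIdx, sIdx]
    have := k.isLt
    split_ifs <;> omega

/-- The geometric realization (polyhedron) `|K|` of an abstract simplicial complex on
`{1, …, m}`: the set of convex weightings of the vertices whose support lies in a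
simplex of `K`, topologized as a subspace of `ℝ^m`. -/
def geomRealSC {m : ℕ} (K : AbsSimplicialComplex m) : Type :=
  {w : Fin m → ℝ // (∀ i, 0 ≤ w i) ∧ (∑ i, w i) = 1 ∧
    ∃ σ ∈ K.faces, ∀ i, w i ≠ 0 → i ∈ σ}

instance {m : ℕ} (K : AbsSimplicialComplex m) : TopologicalSpace (geomRealSC K) := by
  unfold geomRealSC; infer_instance

/-! ### Auxiliary development for Statement 7 -/

section CollapseAPI

variable {Z : Type u} [TopologicalSpace Z] {A : Set Z}

theorem Collapse.mk_eq_pt {z : Z} (hz : z ∈ A) : Collapse.mk A z = (Collapse A).pt :=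
  Quotient.sound (Or.inr ⟨hz, trivial⟩)

theorem Collapse.casesOn' (c : (Collapse A).carrier) :
    (∃ z, c = Collapse.mk A z) ∨ c = (Collapse A).pt := by
  refine Quotient.inductionOn c ?_
  rintro (z | u)
  · exact Or.inl ⟨z, rfl⟩
  · exact Or.inr rfl

theorem Collapse.mk_eq_pt_iff {z : Z} : Collapse.mk A z = (Collapse A).pt ↔ z ∈ A := by
  constructor
  · intro h
    rcases Quotient.exact h with h | ⟨h1, _⟩
    · cases h
    · exact h1
  · exact Collapse.mk_eq_pt

theorem Collapse.mk_eq_mk_iff {z z' : Z} :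
    Collapse.mk A z = Collapse.mk A z' ↔ z = z' ∨ (z ∈ A ∧ z' ∈ A) := by
  constructor
  · intro h
    rcases Quotient.exact h with h | ⟨h1, h2⟩
    · exact Or.inl (Sum.inl.inj h)
    · exact Or.inr ⟨h1, h2⟩
  · rintro (rfl | ⟨h1, h2⟩)
    · rfl
    · exact Quotient.sound (Or.inr ⟨h1, h2⟩)

theorem Collapse.continuous_mk : Continuous (Collapse.mk A) :=
  continuous_quotient_mk'.comp continuous_inl

/-- Universal property of `Collapse`. -/
def Collapse.lift {T : Type v} (A : Set Z) (f : Z → T) (t0 : T) (hf : ∀ z ∈ A, f z = t0) :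
    (Collapse A).carrier → T :=
  Quotient.lift (Sum.elim f fun _ => t0) (by
    rintro x y (rfl | ⟨h1, h2⟩)
    · rfl
    · rcases x with x | x <;> rcases y with y | y <;>
        simp only [collapseGood, Sum.elim_inl, Sum.elim_inr] at h1 h2 ⊢
      · rw [hf _ h1, hf _ h2]
      · rw [hf _ h1]
      · rw [hf _ h2])

@[simp] theorem Collapse.lift_mk {T : Type v} {f : Z → T} {t0 : T} {hf : ∀ z ∈ A, f z = t0}
    (z : Z) : Collapse.lift A f t0 hf (Collapse.mk A z) = f z := rfl

@[simp] theorem Collapse.lift_pt {T : Type v} {f : Z → T} {t0 : T} {hf : ∀ z ∈ A, f z = t0} :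
    Collapse.lift A f t0 hf (Collapse A).pt = t0 := rfl

theorem Collapse.continuous_lift {T : Type v} [TopologicalSpace T] {f : Z → T} {t0 : T}
    {hf : ∀ z ∈ A, f z = t0} (hfc : Continuous f) :
    Continuous (Collapse.lift A f t0 hf) := by
  apply Continuous.quotient_lift
  exact hfc.sumElim continuous_const

end CollapseAPI

section WedgeAPI

variable {ι : Type v} {P : ι → PSpace.{u}}

theorem Wedge.mk_pt_eq_pt (i : ι) : Wedge.mk P i (P i).pt = (Wedge P).pt :=
  Collapse.mk_eq_pt rfl

theorem Wedge.casesOn' (w : (Wedge P).carrier) :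
    (∃ i z, w = Wedge.mk P i z) ∨ w = (Wedge P).pt := by
  rcases Collapse.casesOn' w with ⟨⟨i, z⟩, rfl⟩ | h
  · exact Or.inl ⟨i, z, rfl⟩
  · exact Or.inr h

theorem Wedge.continuous_mk (i : ι) : Continuous (Wedge.mk P i) :=
  Collapse.continuous_mk.comp continuous_sigmaMk

/-- Universal property of `Wedge`. -/
def Wedge.lift {T : Type (max u v)} (f : ∀ i, (P i).carrier → T) (t0 : T)
    (hf : ∀ i, f i (P i).pt = t0) : (Wedge P).carrier → T :=
  Collapse.lift _ (fun x => f x.1 x.2) t0 (by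
    rintro ⟨i, z⟩ hz
    simp only [Set.mem_setOf_eq] at hz
    show f i z = t0
    rw [hz, hf])

@[simp] theorem Wedge.lift_mk {T : Type (max u v)} {f : ∀ i, (P i).carrier → T} {t0 : T}
    {hf : ∀ i, f i (P i).pt = t0} (i : ι) (z : (P i).carrier) :
    Wedge.lift f t0 hf (Wedge.mk P i z) = f i z := rfl

@[simp] theorem Wedge.lift_pt {T : Type (max u v)} {f : ∀ i, (P i).carrier → T} {t0 : T}
    {hf : ∀ i, f i (P i).pt = t0} : Wedge.lift f t0 hf (Wedge P).pt = t0 := rfl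

theorem Wedge.continuous_lift {T : Type (max u v)} [TopologicalSpace T]
    {f : ∀ i, (P i).carrier → T} {t0 : T} {hf : ∀ i, f i (P i).pt = t0}
    (hfc : ∀ i, Continuous (f i)) : Continuous (Wedge.lift f t0 hf) :=
  Collapse.continuous_lift (continuous_sigma hfc)

end WedgeAPI

namespace SimplicialSpace

/-- The disjoint union of all the levels of a simplicial space. -/
def Tot (X : SimplicialSpace.{u}) : Type u := Σ n, X.X n

instance (X : SimplicialSpace.{u}) : TopologicalSpace X.Tot := by
  unfold Tot; infer_instance

variable {X : SimplicialSpace.{u}}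

/-- Degeneracy operator on the total space. -/
def sT (X : SimplicialSpace.{u}) (i : ℕ) : X.Tot → X.Tot :=
  fun p => ⟨p.1 + 1, X.s p.1 i p.2⟩

/-- Face operator on the total space (identity in degree 0). -/
def dT (X : SimplicialSpace.{u}) (i : ℕ) : X.Tot → X.Tot
  | ⟨0, x⟩ => ⟨0, x⟩
  | ⟨n + 1, x⟩ => ⟨n, X.d n i x⟩

theorem continuous_sT (i : ℕ) : Continuous (X.sT i) := by
  apply continuous_sigma
  intro n
  exact continuous_sigmaMk.comp (X.continuous_s n i)

theorem continuous_dT (i : ℕ) : Continuous (X.dT i) := by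
  apply continuous_sigma
  intro n
  match n with
  | 0 => exact continuous_sigmaMk
  | n + 1 => exact continuous_sigmaMk.comp (X.continuous_d n i)

@[simp] theorem sT_fst (i : ℕ) (p : X.Tot) : (X.sT i p).1 = p.1 + 1 := rfl

@[simp] theorem dT_fst (i : ℕ) (p : X.Tot) : (X.dT i p).1 = p.1 - 1 := by
  obtain ⟨(_ | n), x⟩ := p <;> rfl

/- Simplicial identities on the total space. -/

theorem sT_sT {i j : ℕ} (hij : i ≤ j) (p : X.Tot) (hj : j ≤ p.1) :
    X.sT i (X.sT j p) = X.sT (j + 1) (X.sT i p) := by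
  obtain ⟨n, x⟩ := p
  exact congrArg (Sigma.mk (n + 2)) (X.ss n i j hij hj x)

theorem dT_sT_eq {j : ℕ} (p : X.Tot) (hj : j ≤ p.1) : X.dT j (X.sT j p) = p := by
  obtain ⟨n, x⟩ := p
  exact congrArg (Sigma.mk n) (X.ds_eq n j hj x)

theorem dT_sT_eq' {j : ℕ} (p : X.Tot) (hj : j ≤ p.1) : X.dT (j + 1) (X.sT j p) = p := by
  obtain ⟨n, x⟩ := p
  exact congrArg (Sigma.mk n) (X.ds_eq' n j hj x)

theorem dT_sT_lt {i j : ℕ} (hij : i < j) (p : X.Tot) (hj : j ≤ p.1) :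
    X.dT i (X.sT j p) = X.sT (j - 1) (X.dT i p) := by
  obtain ⟨(_ | n), x⟩ := p
  · exact absurd (show j ≤ 0 from hj) (by omega)
  · exact congrArg (Sigma.mk (n + 1)) (X.ds_lt n i j hij hj x)

theorem dT_sT_gt {i j : ℕ} (hij : j + 1 < i) (p : X.Tot) (hi : i ≤ p.1 + 1) :
    X.dT i (X.sT j p) = X.sT j (X.dT (i - 1) p) := by
  obtain ⟨(_ | n), x⟩ := p
  · exact absurd (show i ≤ 0 + 1 from hi) (by omega)
  · exact congrArg (Sigma.mk (n + 1)) (X.ds_gt n i j hij hi x)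

/-- Composite degeneracy on the total space. -/
def sCompT (X : SimplicialSpace.{u}) (K : List ℕ) (p : X.Tot) : X.Tot :=
  ⟨p.1 + K.length, X.sComp K p.1 p.2⟩

@[simp] theorem sCompT_nil (p : X.Tot) : X.sCompT [] p = p := rfl

theorem sCompT_cons (k : ℕ) (K : List ℕ) (p : X.Tot) :
    X.sCompT (k :: K) p = X.sT k (X.sCompT K p) := rfl

@[simp] theorem sCompT_fst (K : List ℕ) (p : X.Tot) :
    (X.sCompT K p).1 = p.1 + K.length := rfl

theorem continuous_sCompT (K : List ℕ) : Continuous (X.sCompT K) := by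
  induction K with
  | nil => exact continuous_id
  | cons k K ih =>
      have : X.sCompT (k :: K) = X.sT k ∘ X.sCompT K := by
        funext p; rfl
      rw [this]
      exact (continuous_sT k).comp ih

/-- Composite face operator on the total space (head applied first). -/
def dCompT (X : SimplicialSpace.{u}) : List ℕ → X.Tot → X.Tot
  | [], p => p
  | e :: E, p => X.dCompT E (X.dT e p)

theorem continuous_dCompT (E : List ℕ) : Continuous (X.dCompT E) := by
  induction E with
  | nil => exact continuous_id
  | cons e E ih =>
      have : X.dCompT (e :: E) = X.dCompT E ∘ X.dT e := by
        funext p; rfl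
      rw [this]
      exact ih.comp (continuous_dT e)

theorem dCompT_fst (E : List ℕ) (p : X.Tot) : (X.dCompT E p).1 = p.1 - E.length := by
  induction E generalizing p with
  | nil => rfl
  | cons e E ih =>
      show (X.dCompT E (X.dT e p)).1 = _
      rw [ih, dT_fst]
      simp only [List.length_cons]
      omega

/-- The image of a single degeneracy, within the total space. -/
def imDegT (X : SimplicialSpace.{u}) (j : ℕ) : Set X.Tot :=
  {p | ∃ q : X.Tot, j ≤ q.1 ∧ X.sT j q = p}

/-- The image of a composite degeneracy, within the total space. -/
def imSeqT (X : SimplicialSpace.{u}) (K : List ℕ) : Set X.Tot :=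
  {p | ∃ q : X.Tot, ValidSeq K q.1 ∧ X.sCompT K q = p}

/-- The degeneracy filtration, within the total space. -/
def filtT (X : SimplicialSpace.{u}) (t : ℕ) : Set X.Tot :=
  {p | p.2 ∈ X.filtS t p.1}

theorem sT_mem_filtT {t j : ℕ} {p : X.Tot} (hj : j ≤ p.1) (hp : p ∈ X.filtT t) :
    X.sT j p ∈ X.filtT (t + 1) := by
  obtain ⟨n, x⟩ := p
  exact ⟨n, rfl, j, hj, x, hp, rfl⟩

theorem filtT_succ_dest {t : ℕ} {p : X.Tot} (hp : p ∈ X.filtT (t + 1)) :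
    ∃ q : X.Tot, ∃ j, j ≤ q.1 ∧ q ∈ X.filtT t ∧ X.sT j q = p := by
  obtain ⟨n, x⟩ := p
  obtain ⟨m, hm, i, hi, y, hy, hc⟩ := hp
  have hm' : m + 1 = n := hm
  subst hm'
  exact ⟨⟨m, y⟩, i, hi, hy, congrArg (Sigma.mk (m + 1)) hc⟩

end SimplicialSpace

/-- Admissibility of a sequence of degeneracy indices: strictly decreasing. -/
abbrev Adm (K : List ℕ) : Prop := K.Pairwise (· > ·)

theorem Adm.of_cons {k : ℕ} {K : List ℕ} (h : Adm (k :: K)) : Adm K :=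
  List.Pairwise.of_cons h

theorem Adm.head_gt {k : ℕ} {K : List ℕ} (h : Adm (k :: K)) : ∀ b ∈ K, b < k :=
  fun b hb => (List.pairwise_cons.mp h).1 b hb

theorem Adm.length_le {k : ℕ} {K : List ℕ} (h : Adm (k :: K)) : K.length ≤ k := by
  induction K generalizing k with
  | nil => exact Nat.zero_le _
  | cons k' K ih =>
      have h1 := ih (h.of_cons)
      have h2 : k' < k := h.head_gt k' (List.mem_cons_self)
      simp only [List.length_cons]
      omega

theorem adm_eq_of_mem_iff {I J : List ℕ} (hI : Adm I) (hJ : Adm J)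
    (h : ∀ a, a ∈ I ↔ a ∈ J) : I = J := by
  refine List.Perm.eq_of_pairwise (fun a b _ _ h1 h2 => absurd (lt_trans h1 h2) (lt_irrefl _)) hI hJ ?_
  exact (List.perm_ext_iff_of_nodup hI.nodup hJ.nodup).mpr h

theorem nodup_length_le {I J : List ℕ} (hI : I.Nodup) (h : ∀ a ∈ I, a ∈ J) :
    I.length ≤ J.length := by
  calc I.length = I.toFinset.card := (List.toFinset_card_of_nodup hI).symm
    _ ≤ J.toFinset.card := Finset.card_le_card (by
        intro a ha
        rw [List.mem_toFinset] at ha ⊢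
        exact h a ha)
    _ ≤ J.length := J.toFinset_card_le

theorem valid_of_adm {K : List ℕ} {m : ℕ} (hK : Adm K)
    (h : ∀ a ∈ K, a + 1 ≤ m + K.length) : SimplicialSpace.ValidSeq K m := by
  induction K with
  | nil => trivial
  | cons k K ih =>
      refine ⟨?_, ih hK.of_cons fun a ha => ?_⟩
      · have := h k (List.mem_cons_self)
        simp only [List.length_cons] at this
        omega
      · have h1 := hK.head_gt a ha
        have h2 := h k (List.mem_cons_self)
        simp only [List.length_cons] at h2
        omega

namespace SimplicialSpace

variable {X : SimplicialSpace.{u}}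

theorem filtS_eq_empty {t n : ℕ} (h : n < t) : X.filtS t n = ∅ := by
  induction t generalizing n with
  | zero => omega
  | succ t ih =>
      ext x
      simp only [Set.mem_empty_iff_false, iff_false]
      rintro ⟨m, rfl, i, hi, y, hy, hc⟩
      rw [ih (by omega)] at hy
      exact hy

theorem sCompT_mem_filtT {K : List ℕ} {t : ℕ} {q : X.Tot} (hv : ValidSeq K q.1)
    (hq : q ∈ X.filtT t) : X.sCompT K q ∈ X.filtT (t + K.length) := by
  induction K with
  | nil => exact hq
  | cons k K ih =>
      rw [sCompT_cons]
      exact sT_mem_filtT (by simpa using hv.1) (ih hv.2)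

theorem mem_filtT_zero (q : X.Tot) : q ∈ X.filtT 0 := Set.mem_univ _

theorem imSeqT_subset_filtT {K : List ℕ} : X.imSeqT K ⊆ X.filtT K.length := by
  rintro p ⟨q, hv, rfl⟩
  have := sCompT_mem_filtT hv (mem_filtT_zero q)
  rwa [Nat.zero_add] at this

theorem imDegT_subset_filtT1 {j : ℕ} : X.imDegT j ⊆ X.filtT 1 := by
  rintro p ⟨q, hj, rfl⟩
  exact sT_mem_filtT hj (mem_filtT_zero q)

/-- Sorting a degeneracy composite: inserting one more degeneracy. -/
theorem insert_sort (i : ℕ) (K : List ℕ) (q : X.Tot) (hK : Adm K) (hv : ValidSeq K q.1)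
    (hi : i ≤ q.1 + K.length) :
    ∃ M, Adm M ∧ M.length = K.length + 1 ∧ ValidSeq M q.1 ∧
      X.sCompT M q = X.sT i (X.sCompT K q) ∧
      ∀ a ∈ M, a ∈ i :: K ∨ ∃ b ∈ K, a = b + 1 := by
  induction K generalizing i with
  | nil =>
      exact ⟨[i], List.pairwise_singleton _ i, rfl, ⟨by simpa using hi, trivial⟩, rfl, by simp⟩
  | cons k K ih =>
      by_cases hik : k < i
      · refine ⟨i :: k :: K, ?_, rfl, ⟨by simpa using hi, hv⟩, rfl, fun a ha => Or.inl ha⟩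
        refine List.pairwise_cons.mpr ⟨?_, hK⟩
        intro b hb
        rcases List.mem_cons.mp hb with rfl | hb'
        · exact hik
        · exact lt_trans (hK.head_gt b hb') hik
      · have hik' : i ≤ k := by omega
        have hkq : k ≤ q.1 + K.length := by simpa using hv.1
        obtain ⟨M', hM'a, hM'l, hM'v, hM'e, hM'm⟩ :=
          ih i hK.of_cons hv.2 (le_trans hik' hkq)
        refine ⟨(k + 1) :: M', ?_, by simp [hM'l], ⟨?_, hM'v⟩, ?_, ?_⟩
        · refine List.pairwise_cons.mpr ⟨?_, hM'a⟩
          intro b hb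
          rcases hM'm b hb with hb' | ⟨c, hc, rfl⟩
          · rcases List.mem_cons.mp hb' with rfl | hb''
            · omega
            · have := hK.head_gt b hb''
              omega
          · have := hK.head_gt c hc
            omega
        · simp only [hM'l, List.length_cons]
          omega
        · rw [sCompT_cons, hM'e, sCompT_cons]
          have := sT_sT (X := X) hik' (X.sCompT K q) (by simpa using hkq)
          exact this.symm
        · intro a ha
          rcases List.mem_cons.mp ha with rfl | ha'
          · exact Or.inr ⟨k, List.mem_cons_self, rfl⟩
          · rcases hM'm a ha' with ha'' | ⟨c, hc, rfl⟩
            · rcases List.mem_cons.mp ha'' with rfl | ha'''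
              · exact Or.inl (List.mem_cons_self)
              · exact Or.inl (List.mem_cons_of_mem _ (List.mem_cons_of_mem _ ha'''))
            · exact Or.inr ⟨c, List.mem_cons_of_mem _ hc, rfl⟩

/-- Every point of the `t`-th filtration stage is in the image of an admissible
`t`-fold composite degeneracy. -/
theorem filtT_dest {t : ℕ} {p : X.Tot} (hp : p ∈ X.filtT t) :
    ∃ K, Adm K ∧ K.length = t ∧ p ∈ X.imSeqT K := by
  induction t generalizing p with
  | zero => exact ⟨[], List.Pairwise.nil, rfl, ⟨p, trivial, rfl⟩⟩
  | succ t ih =>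
      obtain ⟨q, j, hj, hq, rfl⟩ := filtT_succ_dest hp
      obtain ⟨K, hKa, hKl, q0, hv0, rfl⟩ := ih hq
      obtain ⟨M, hMa, hMl, hMv, hMe, -⟩ :=
        insert_sort j K q0 hKa hv0 (by simpa using hj)
      exact ⟨M, hMa, by omega, q0, hMv, hMe⟩

/-- Pull-out lemma: the image of an admissible composite degeneracy is contained in
the image of each of its constituents. -/
theorem mem_imDegT_of_mem {K : List ℕ} {j : ℕ} (hK : Adm K) (hj : j ∈ K) :
    ∀ {p : X.Tot}, p ∈ X.imSeqT K → p ∈ X.imDegT j := by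
  induction K with
  | nil => cases hj
  | cons k K ih =>
      rintro p ⟨q, hv, rfl⟩
      rcases List.mem_cons.mp hj with rfl | hj'
      · exact ⟨X.sCompT K q, by simpa using hv.1, (sCompT_cons _ _ _).symm⟩
      · obtain ⟨z, hz, hze⟩ := ih (Adm.of_cons hK) hj' ⟨q, hv.2, rfl⟩
        have hkj : j < k := hK.head_gt j hj'
        have hlev : z.1 + 1 = q.1 + K.length := by
          have := congrArg Sigma.fst hze
          simpa using this
        have hkq : k ≤ q.1 + K.length := hv.1
        have hkz : k - 1 ≤ z.1 := by omega
        have h1 : X.sT j (X.sT (k - 1) z) = X.sT k (X.sT j z) := by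
          have := sT_sT (X := X) (show j ≤ k - 1 by omega) z hkz
          have hk1 : k - 1 + 1 = k := by omega
          rwa [hk1] at this
        refine ⟨X.sT (k - 1) z, by simp only [sT_fst]; omega, ?_⟩
        rw [h1, hze]
        exact (sCompT_cons _ _ _).symm

/-- Pushing a face operator past a composite degeneracy with smaller indices. -/
theorem dT_push {K : List ℕ} {i : ℕ} (hK : Adm K) (q : X.Tot) (hv : ValidSeq K q.1)
    (hgt : ∀ k ∈ K, k + 1 < i) (hi : i ≤ q.1 + K.length) :
    X.dT i (X.sCompT K q) = X.sCompT K (X.dT (i - K.length) q) := by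
  induction K generalizing i with
  | nil => simp
  | cons k K ih =>
      have hk : k + 1 < i := hgt k (List.mem_cons_self)
      rw [sCompT_cons, dT_sT_gt hk _ (by simp only [sCompT_fst]; simp only [List.length_cons] at hi; omega)]
      rw [ih (i := i - 1) hK.of_cons hv.2
        (fun k' hk' => by have h1 := hK.head_gt k' hk'; omega)
        (by simp only [List.length_cons] at hi; omega)]
      have harith : i - 1 - K.length = i - (k :: K).length := by
        simp only [List.length_cons]; omega
      rw [harith, ← sCompT_cons]

/-- If an admissible composite degeneracy lands in the image of `s_j`, then `j` occurs in
the sequence, unless the bottom point is itself degenerate. -/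
theorem mem_of_sCompT_mem_imDegT {K : List ℕ} {j : ℕ} (hK : Adm K) (q : X.Tot)
    (hv : ValidSeq K q.1) (hmem : X.sCompT K q ∈ X.imDegT j) :
    j ∈ K ∨ q ∈ X.filtT 1 := by
  induction K generalizing j with
  | nil => exact Or.inr (imDegT_subset_filtT1 hmem)
  | cons k K ih =>
      obtain ⟨z, hjz, hze⟩ := hmem
      have hlevz : z.1 + 1 = q.1 + (k :: K).length := congrArg Sigma.fst hze
      have hkw : k ≤ q.1 + K.length := by simpa using hv.1
      rcases lt_trichotomy j k with hlt | rfl | hgt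
      · have hw : X.sCompT K q ∈ X.imDegT j := by
          have e1 : X.sCompT K q = X.dT (k + 1) (X.sT j z) := by
            rw [hze, sCompT_cons, dT_sT_eq' _ (by simpa using hkw)]
          rw [e1, dT_sT_gt (by omega) z (by simp only [List.length_cons] at hlevz; omega)]
          exact ⟨X.dT k z, by simp only [dT_fst]; simp only [List.length_cons] at hlevz; omega,
            rfl⟩
        rcases ih hK.of_cons hv.2 hw with h | h
        · exact Or.inl (List.mem_cons_of_mem _ h)
        · exact Or.inr h
      · exact Or.inl (List.mem_cons_self)
      · have hw : X.sCompT K q ∈ X.imDegT (j - 1) := by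
          have e1 : X.sCompT K q = X.dT k (X.sT j z) := by
            rw [hze, sCompT_cons, dT_sT_eq _ (by simpa using hkw)]
          rw [e1, dT_sT_lt hgt z hjz]
          exact ⟨X.dT k z, by simp only [dT_fst]; omega, rfl⟩
        rcases ih hK.of_cons hv.2 hw with h | h
        · have := hK.head_gt _ h
          omega
        · exact Or.inr h

/-- A point in the image of an admissible composite degeneracy and also in the image of
`s_j`, `j` not occurring, is in the image of a longer admissible composite. -/
theorem insert_imDeg {K : List ℕ} {j : ℕ} (hK : Adm K) (q : X.Tot) (hv : ValidSeq K q.1)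
    (hj : j ∉ K) (hmem : X.sCompT K q ∈ X.imDegT j) :
    ∃ M, Adm M ∧ M.length = K.length + 1 ∧ (∀ a, a ∈ M ↔ a = j ∨ a ∈ K) ∧
      X.sCompT K q ∈ X.imSeqT M := by
  induction K generalizing j with
  | nil =>
      obtain ⟨z, hz, hze⟩ := hmem
      refine ⟨[j], List.pairwise_singleton _ j, rfl, by simp, z, ⟨by simpa using hz, trivial⟩, ?_⟩
      exact hze
  | cons k K ih =>
      obtain ⟨z, hjz, hze⟩ := hmem
      have hlevz : z.1 = q.1 + K.length := by
        have := congrArg Sigma.fst hze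
        simp only [sT_fst, sCompT_fst, List.length_cons] at this
        omega
      have hkq : k ≤ q.1 + K.length := by simpa using hv.1
      have hjk : j ≠ k := fun h => hj (h ▸ List.mem_cons_self)
      rcases lt_or_gt_of_ne hjk with hlt | hgt
      · -- `j < k` : recurse inside
        have hw : X.sCompT K q ∈ X.imDegT j := by
          have e1 : X.sCompT K q = X.dT (k + 1) (X.sT j z) := by
            rw [hze, sCompT_cons, dT_sT_eq' _ (by simpa using hkq)]
          rw [e1, dT_sT_gt (by omega) z (by omega)]
          exact ⟨X.dT k z, by simp only [dT_fst]; omega, rfl⟩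
        obtain ⟨M', hM'a, hM'l, hM'm, q', hq'v, hq'e⟩ :=
          ih hK.of_cons hv.2 (fun h => hj (List.mem_cons_of_mem _ h)) hw
        have hlev' : q'.1 + M'.length = q.1 + K.length := by
          have := congrArg Sigma.fst hq'e
          simpa using this
        refine ⟨k :: M', ?_, by simp [hM'l], ?_, q', ⟨by omega, hq'v⟩, ?_⟩
        · refine List.pairwise_cons.mpr ⟨?_, hM'a⟩
          intro b hb
          rcases (hM'm b).mp hb with rfl | hb'
          · exact hlt
          · exact hK.head_gt b hb'
        · intro a
          simp only [List.mem_cons, hM'm a]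
          tauto
        · rw [sCompT_cons, hq'e]
          exact (sCompT_cons _ _ _).symm
      · -- `j > k` : the whole composite can be pushed under `s_j`
        have hkK : K.length ≤ k := hK.length_le
        have hjq : j ≤ q.1 + K.length := by omega
        have hq1 : 1 ≤ q.1 := by omega
        have hz_eq : z = X.sCompT (k :: K) (X.dT (j - K.length) q) := by
          have e1 : z = X.dT (j + 1) (X.sCompT (k :: K) q) := by
            rw [← hze, dT_sT_eq' z hjz]
          rw [e1, dT_push hK q hv
            (fun k' hk' => by
              rcases List.mem_cons.mp hk' with rfl | hk''
              · omega
              · have := hK.head_gt k' hk''; omega)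
            (by simp only [List.length_cons]; omega)]
          simp only [List.length_cons]
          have harr : j + 1 - (K.length + 1) = j - K.length := by omega
          rw [harr]
        have hq2v : ValidSeq (k :: K) (X.dT (j - K.length) q).1 := by
          apply valid_of_adm hK
          intro a ha
          simp only [dT_fst, List.length_cons]
          rcases List.mem_cons.mp ha with rfl | ha'
          · omega
          · have := hK.head_gt a ha'; omega
        refine ⟨j :: k :: K, ?_, rfl, by simp, X.dT (j - K.length) q, ⟨?_, hq2v⟩, ?_⟩
        · refine List.pairwise_cons.mpr ⟨?_, hK⟩
          intro b hb
          rcases List.mem_cons.mp hb with rfl | hb'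
          · exact hgt
          · exact lt_trans (hK.head_gt b hb') hgt
        · simp only [dT_fst, List.length_cons]
          omega
        · rw [sCompT_cons, ← hz_eq, hze]

/-- If an admissible composite degeneracy lands one filtration step deeper than its
length, the bottom point is degenerate. -/
theorem bottom_deg_of_filt {K : List ℕ} (hK : Adm K) (q : X.Tot) (hv : ValidSeq K q.1)
    (hmem : X.sCompT K q ∈ X.filtT (K.length + 1)) : q ∈ X.filtT 1 := by
  by_contra hq
  obtain ⟨K₁, hK₁a, hK₁l, hmem₁⟩ := filtT_dest hmem
  have hsub : ∀ j ∈ K₁, j ∈ K := by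
    intro j hj
    rcases mem_of_sCompT_mem_imDegT hK q hv (mem_imDegT_of_mem hK₁a hj hmem₁) with h | h
    · exact h
    · exact absurd h hq
  have := nodup_length_le hK₁a.nodup hsub
  omega

/-- Uniqueness of the admissible sequence for a non-deeper point. -/
theorem imSeqT_uniq {I J : List ℕ} (hI : Adm I) (hJ : Adm J) (hIJ : I.length = J.length)
    {p : X.Tot} (hpI : p ∈ X.imSeqT I) (hpJ : p ∈ X.imSeqT J)
    (hnd : p ∉ X.filtT (I.length + 1)) : I = J := by
  have key : ∀ (I' J' : List ℕ), Adm I' → Adm J' → I'.length = J'.length →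
      p ∈ X.imSeqT I' → p ∈ X.imSeqT J' → p ∉ X.filtT (I'.length + 1) →
      ∀ a ∈ I', a ∈ J' := by
    intro I' J' hI' hJ' hIJ' hpI' hpJ' hnd' a ha
    by_contra haJ
    obtain ⟨q, hv, rfl⟩ := hpJ'
    rcases mem_of_sCompT_mem_imDegT hJ' q hv (mem_imDegT_of_mem hI' ha hpI') with h | h
    · exact haJ h
    · refine hnd' ?_
      have := sCompT_mem_filtT hv h
      rwa [Nat.add_comm 1 J'.length, ← hIJ'] at this
  refine adm_eq_of_mem_iff hI hJ fun a => ⟨?_, ?_⟩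
  · exact fun ha => key I J hI hJ hIJ hpI hpJ hnd a ha
  · exact fun ha => key J I hJ hI hIJ.symm hpJ hpI (by rwa [hIJ] at hnd) a ha

/-- A point lying in the image of `s_j` for every `j ∈ J`, `J` admissible, lies in the
image of `s_J`. -/
theorem mem_imSeqT_of_forall {J : List ℕ} (hJ : Adm J) {p : X.Tot}
    (h : ∀ j ∈ J, p ∈ X.imDegT j) : p ∈ X.imSeqT J := by
  suffices h' : ∀ L : List ℕ, L.Nodup → (∀ j ∈ L, p ∈ X.imDegT j) →
      ∃ M, Adm M ∧ M.length = L.length ∧ (∀ a, a ∈ M ↔ a ∈ L) ∧ p ∈ X.imSeqT M by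
    obtain ⟨M, hMa, hMl, hMm, hMp⟩ := h' J hJ.nodup h
    rwa [adm_eq_of_mem_iff hMa hJ hMm] at hMp
  intro L hLn hL
  induction L with
  | nil => exact ⟨[], List.Pairwise.nil, rfl, by simp, p, trivial, rfl⟩
  | cons j L ihL =>
      obtain ⟨M, hMa, hMl, hMm, hMp⟩ :=
        ihL hLn.of_cons fun j' hj' => hL j' (List.mem_cons_of_mem _ hj')
      have hjM : j ∉ M := fun hjM =>
        (List.nodup_cons.mp hLn).1 ((hMm j).mp hjM)
      obtain ⟨q, hqv, rfl⟩ := hMp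
      obtain ⟨M', hM'a, hM'l, hM'm, hM'p⟩ :=
        insert_imDeg hMa q hqv hjM (hL j (List.mem_cons_self))
      refine ⟨M', hM'a, by simp only [List.length_cons]; omega, fun a => ?_, hM'p⟩
      rw [hM'm a, List.mem_cons, hMm a]

theorem valid_entry_lt {K : List ℕ} {m : ℕ} (hv : ValidSeq K m) :
    ∀ a ∈ K, a < m + K.length := by
  induction K with
  | nil => simp
  | cons k K ih =>
      intro a ha
      rcases List.mem_cons.mp ha with rfl | ha'
      · have := hv.1
        simp only [List.length_cons]
        omega
      · have := ih hv.2 a ha'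
        simp only [List.length_cons]
        omega

/-- Extracting the underlying point of a total-space element of known level. -/
def totAt (p : X.Tot) (n : ℕ) (h : p.1 = n) : X.X n := cast (congrArg X.X h) p.2

theorem mk_totAt (p : X.Tot) (n : ℕ) (h : p.1 = n) :
    (⟨n, totAt p n h⟩ : X.Tot) = p := by
  obtain ⟨m, y⟩ := p
  have h' : m = n := h
  subst h'
  rfl

theorem totAt_eq {p : X.Tot} {n : ℕ} {x : X.X n} (h : p = ⟨n, x⟩) (h' : p.1 = n) :
    totAt p n h' = x := by
  subst h
  rfl

theorem totAt_mem_filtS {p : X.Tot} {t n : ℕ} (hp : p ∈ X.filtT t) (h : p.1 = n) :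
    totAt p n h ∈ X.filtS t n := by
  obtain ⟨m, y⟩ := p
  have h' : m = n := h
  subst h'
  exact hp

theorem continuous_totAt {A : Type v} [TopologicalSpace A] {n : ℕ}
    {f : A → X.Tot} (hf : Continuous f) (hn : ∀ a, (f a).1 = n) :
    Continuous fun a => totAt (f a) n (hn a) := by
  rw [Topology.IsEmbedding.sigmaMk.continuous_iff]
  have : (Sigma.mk n ∘ fun a => totAt (f a) n (hn a)) = f := by
    funext a
    exact mk_totAt (f a) n (hn a)
  rw [this]
  exact hf

/-- Construction of a retraction face word for an admissible degeneracy sequence, which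
degenerates the image of any other degeneracy `s_j`, `j ∉ K`. -/
theorem exists_dword {K : List ℕ} (hK : Adm K) (j : ℕ) (hj : j ∉ K) :
    ∃ E : List ℕ, E.length = K.length ∧
      (∀ q : X.Tot, ValidSeq K q.1 → X.dCompT E (X.sCompT K q) = q) ∧
      (∀ w : X.Tot, j ≤ w.1 → (∀ k ∈ K, k ≤ w.1) →
        X.dCompT E (X.sT j w) ∈ X.filtT 1) := by
  induction K generalizing j with
  | nil =>
      exact ⟨[], rfl, fun q _ => rfl, fun w hw _ => sT_mem_filtT hw (mem_filtT_zero w)⟩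
  | cons k K ih =>
      have hjk : j ≠ k := fun h => hj (h ▸ List.mem_cons_self)
      have hKk : ∀ b ∈ K, b < k := hK.head_gt
      by_cases hcase : j = k + 1
      · -- use `e = k`, new index `k`
        obtain ⟨E', hE'l, hE'1, hE'2⟩ := ih hK.of_cons k (fun h => absurd (hKk k h) (lt_irrefl k))
        refine ⟨k :: E', by simp [hE'l], ?_, ?_⟩
        · intro q hv
          show X.dCompT E' (X.dT k (X.sT k (X.sCompT K q))) = q
          rw [dT_sT_eq _ (by simpa using hv.1)]
          exact hE'1 q hv.2
        · intro w hjw hKw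
          show X.dCompT E' (X.dT k (X.sT j w)) ∈ X.filtT 1
          rw [dT_sT_lt (by omega) w hjw]
          have : j - 1 = k := by omega
          rw [this]
          exact hE'2 (X.dT k w) (by simp only [dT_fst]; omega)
            (fun b hb => by have h1 := hKk b hb
                            have h2 := hKw k (List.mem_cons_self)
                            simp only [dT_fst]; omega)
      · -- use `e = k + 1`
        rcases lt_or_gt_of_ne hjk with hlt | hgt
        · -- j < k, new index `j`
          obtain ⟨E', hE'l, hE'1, hE'2⟩ := ih hK.of_cons j
            (fun h => hj (List.mem_cons_of_mem _ h))
          refine ⟨(k + 1) :: E', by simp [hE'l], ?_, ?_⟩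
          · intro q hv
            show X.dCompT E' (X.dT (k + 1) (X.sT k (X.sCompT K q))) = q
            rw [dT_sT_eq' _ (by simpa using hv.1)]
            exact hE'1 q hv.2
          · intro w hjw hKw
            show X.dCompT E' (X.dT (k + 1) (X.sT j w)) ∈ X.filtT 1
            have hkw : k ≤ w.1 := hKw k (List.mem_cons_self)
            rw [dT_sT_gt (by omega) w (by omega)]
            have : k + 1 - 1 = k := by omega
            rw [this]
            exact hE'2 (X.dT k w) (by simp only [dT_fst]; omega)
              (fun b hb => by have h1 := hKk b hb
                              simp only [dT_fst]; omega)
        · -- j > k + 1, new index `j - 1`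
          obtain ⟨E', hE'l, hE'1, hE'2⟩ := ih hK.of_cons (j - 1)
            (fun h => by have := hKk _ h; omega)
          refine ⟨(k + 1) :: E', by simp [hE'l], ?_, ?_⟩
          · intro q hv
            show X.dCompT E' (X.dT (k + 1) (X.sT k (X.sCompT K q))) = q
            rw [dT_sT_eq' _ (by simpa using hv.1)]
            exact hE'1 q hv.2
          · intro w hjw hKw
            show X.dCompT E' (X.dT (k + 1) (X.sT j w)) ∈ X.filtT 1
            rw [dT_sT_lt (by omega) w hjw]
            exact hE'2 (X.dT (k + 1) w) (by simp only [dT_fst]; omega)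
              (fun b hb => by have h1 := hKk b hb
                              have h2 := hKw k (List.mem_cons_self)
                              simp only [dT_fst]; omega)

/-- The key point-set topological consequence of the simplicial NDR property:
within each filtration stage, the image of each degeneracy is closed. -/
theorem isClosed_imDegSub (X : SimplicialSpace.{u}) (hX : X.SimpliciallyNDR) (n r j : ℕ) :
    IsClosed {x : ↥(X.filtS r n) | (⟨n, (x : X.X n)⟩ : X.Tot) ∈ X.imDegT j} := by
  classical
  by_cases hn : n < r
  · haveI : IsEmpty ↥(X.filtS r n) :=
      Set.isEmpty_coe_sort.mpr (filtS_eq_empty hn)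
    have h2 : {x : ↥(X.filtS r n) | (⟨n, (x : X.X n)⟩ : X.Tot) ∈ X.imDegT j} = ∅ :=
      Set.eq_empty_of_isEmpty _
    rw [h2]
    exact isClosed_empty
  · push_neg at hn
    rw [← closure_subset_iff_isClosed]
    intro x hx
    set S := {x : ↥(X.filtS r n) | (⟨n, (x : X.X n)⟩ : X.Tot) ∈ X.imDegT j} with hS
    set P : ℕ → Prop := fun t => (x : X.X n) ∈ X.filtS t n with hPdef
    set t0 := Nat.findGreatest P n with ht0
    have hPr : P r := x.2
    have ht0r : r ≤ t0 := Nat.le_findGreatest hn hPr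
    have hPt0 : P t0 := Nat.findGreatest_spec hn hPr
    have ht0n : t0 ≤ n := Nat.findGreatest_le n
    have hnot : (x : X.X n) ∉ X.filtS (t0 + 1) n := by
      by_cases h : t0 + 1 ≤ n
      · exact Nat.findGreatest_is_greatest (P := P) (show t0 < t0 + 1 by omega) h
      · intro hc
        rw [filtS_eq_empty (show n < t0 + 1 by omega)] at hc
        exact hc
    have hmem : (⟨n, (x : X.X n)⟩ : X.Tot) ∈ X.filtT t0 := hPt0
    obtain ⟨K, hKa, hKl, hKmem⟩ := filtT_dest hmem
    by_contra hxj
    have hjK : j ∉ K := fun h => hxj (mem_imDegT_of_mem hKa h hKmem)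
    obtain ⟨q, hqv, hqe⟩ := hKmem
    have hqlev : q.1 + t0 = n := by
      have := congrArg Sigma.fst hqe
      simp only [sCompT_fst] at this
      omega
    obtain ⟨E, hEl, hE1, hE2⟩ := exists_dword hKa j hjK
    obtain ⟨uu, hh, hA, -, -, -⟩ := hX n t0
    -- the auxiliary operator Θ
    set Th : ↥(X.filtS r n) → X.Tot := fun z => X.sCompT K (X.dCompT E (⟨n, z.1⟩ : X.Tot))
      with hTh
    have hlevE : ∀ z : ↥(X.filtS r n), (X.dCompT E (⟨n, z.1⟩ : X.Tot)).1 = q.1 := by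
      intro z
      refine (dCompT_fst E _).trans ?_
      simp only [hEl, hKl]
      omega
    have hlev : ∀ z : ↥(X.filtS r n), (Th z).1 = n := by
      intro z
      simp only [hTh, sCompT_fst, hlevE z, hKl]
      omega
    have hThmem : ∀ z : ↥(X.filtS r n), Th z ∈ X.filtT t0 := by
      intro z
      have hv : ValidSeq K (X.dCompT E (⟨n, z.1⟩ : X.Tot)).1 := by
        rw [hlevE z]; exact hqv
      have := sCompT_mem_filtT hv (mem_filtT_zero _)
      rwa [Nat.zero_add, hKl] at this
    set φ : ↥(X.filtS r n) → unitInterval :=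
      fun z => uu ⟨totAt (Th z) n (hlev z), totAt_mem_filtS (hThmem z) (hlev z)⟩ with hφ
    have hφcont : Continuous φ := by
      apply uu.continuous.comp
      apply Continuous.subtype_mk
      apply continuous_totAt
      exact (continuous_sCompT K).comp
        ((continuous_dCompT E).comp (continuous_sigmaMk.comp continuous_subtype_val))
    -- φ vanishes on S
    have hvanish : S ⊆ φ ⁻¹' {0} := by
      intro z hz
      obtain ⟨w, hjw, hwe⟩ := hz
      have hwlev : w.1 + 1 = n := congrArg Sigma.fst hwe
      have hdeg : X.dCompT E (⟨n, z.1⟩ : X.Tot) ∈ X.filtT 1 := by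
        rw [← hwe]
        refine hE2 w hjw ?_
        intro k hk
        have := valid_entry_lt hqv k hk
        omega
      have hmemb : Th z ∈ X.filtT (t0 + 1) := by
        have hv : ValidSeq K (X.dCompT E (⟨n, z.1⟩ : X.Tot)).1 := by
          rw [hlevE z]; exact hqv
        have := sCompT_mem_filtT hv hdeg
        rwa [hKl, Nat.add_comm 1 t0] at this
      have : (⟨totAt (Th z) n (hlev z), totAt_mem_filtS (hThmem z) (hlev z)⟩ :
          ↥(X.filtS t0 n)) ∈
          {y : ↥(X.filtS t0 n) | (y : X.X n) ∈ X.filtS (t0 + 1) n} :=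
        totAt_mem_filtS hmemb (hlev z)
      rw [hA] at this
      exact this
    -- φ does not vanish at x
    have hfix : Th x = (⟨n, (x : X.X n)⟩ : X.Tot) := by
      calc Th x = X.sCompT K (X.dCompT E (X.sCompT K q)) := by rw [hTh, hqe]
        _ = X.sCompT K q := by rw [hE1 q hqv]
        _ = (show X.Tot from ⟨n, (x : X.X n)⟩) := hqe
    have hne : φ x ≠ 0 := by
      intro h0
      have : (⟨totAt (Th x) n (hlev x), totAt_mem_filtS (hThmem x) (hlev x)⟩ :
          ↥(X.filtS t0 n)) ∈ uu ⁻¹' {0} := h0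
      rw [← hA] at this
      have h2 : totAt (Th x) n (hlev x) = (x : X.X n) := totAt_eq hfix (hlev x)
      have h3 : totAt (Th x) n (hlev x) ∈ X.filtS (t0 + 1) n := this
      rw [h2] at h3
      exact hnot h3
    exact hne (closure_minimal hvanish (isClosed_singleton.preimage hφcont) hx)

theorem tot_mk_inj {n : ℕ} {a b : X.X n} (h : (⟨n, a⟩ : X.Tot) = ⟨n, b⟩) : a = b := by
  exact sigma_mk_injective h

/-- The action of a morphism of simplicial spaces on total spaces. -/
def Hom.fT {X Y : SimplicialSpace.{u}} (f : X.Hom Y) : X.Tot → Y.Tot :=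
  fun p => ⟨p.1, f.f p.1 p.2⟩

theorem Hom.fT_sT {X Y : SimplicialSpace.{u}} (f : X.Hom Y) {i : ℕ} (p : X.Tot)
    (hi : i ≤ p.1) : f.fT (X.sT i p) = Y.sT i (f.fT p) := by
  obtain ⟨m, x⟩ := p
  exact congrArg (Sigma.mk (m + 1)) (f.comm_s m i hi x)

theorem Hom.fT_sCompT {X Y : SimplicialSpace.{u}} (f : X.Hom Y) (K : List ℕ) (q : X.Tot)
    (hv : ValidSeq K q.1) : f.fT (X.sCompT K q) = Y.sCompT K (f.fT q) := by
  induction K with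
  | nil => rfl
  | cons k K ih =>
      rw [sCompT_cons, f.fT_sT _ (by simpa using hv.1), ih hv.2, sCompT_cons]

theorem Hom.f_mem_filtS {X Y : SimplicialSpace.{u}} (f : X.Hom Y) {t : ℕ} :
    ∀ {n : ℕ} {x : X.X n}, x ∈ X.filtS t n → f.f n x ∈ Y.filtS t n := by
  induction t with
  | zero => exact fun _ => trivial
  | succ t ih =>
      rintro n x ⟨m, hm, i, hi, y, hy, hc⟩
      have hm' : m + 1 = n := hm
      subst hm'
      have hc' : X.s m i y = x := hc
      exact ⟨m, rfl, i, hi, f.f m y, ih hy, by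
        show Y.s m i (f.f m y) = f.f (m + 1) x
        rw [← hc', ← f.comm_s m i hi y]⟩

/-- Typed composite degeneracies, seen in the total space. -/
theorem sFromTo_tot (X : SimplicialSpace.{u}) (K : List ℕ) (n : ℕ) (h : K.length ≤ n)
    (y : X.X (n - K.length)) :
    (⟨n, X.sFromTo K n h y⟩ : X.Tot) = X.sCompT K ⟨n - K.length, y⟩ := by
  apply Sigma.ext
  · show n = n - K.length + K.length
    omega
  · show HEq (cast _ (X.sComp K (n - K.length) y)) _
    exact cast_heq _ _

theorem valid_sub {K : List ℕ} {n : ℕ} (hadm : Adm K) (hlt : ∀ a ∈ K, a < n)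
    (h : K.length ≤ n) : ValidSeq K (n - K.length) := by
  apply valid_of_adm hadm
  intro a ha
  have := hlt a ha
  omega

theorem mem_sImage_iff_tot {K : List ℕ} {n : ℕ} {h : K.length ≤ n} {x : X.X n}
    (hadm : Adm K) (hlt : ∀ a ∈ K, a < n) :
    x ∈ X.sImage K n h ↔ (⟨n, x⟩ : X.Tot) ∈ X.imSeqT K := by
  constructor
  · rintro ⟨y, rfl⟩
    exact ⟨⟨n - K.length, y⟩, valid_sub hadm hlt h, (sFromTo_tot X K n h y).symm⟩
  · rintro ⟨q, hv, hqe⟩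
    have hq : q.1 + K.length = n := by
      have := congrArg Sigma.fst hqe
      simpa using this
    have hq1 : q.1 = n - K.length := by omega
    refine ⟨totAt q (n - K.length) hq1, ?_⟩
    apply tot_mk_inj (n := n)
    rw [sFromTo_tot X K n h, mk_totAt q _ hq1, hqe]

theorem mem_image_filtS_iff {K : List ℕ} {n : ℕ} {h : K.length ≤ n} {x : X.X n}
    (hadm : Adm K) (hlt : ∀ a ∈ K, a < n) :
    x ∈ X.sFromTo K n h '' X.filtS 1 (n - K.length) ↔
      ∃ q : X.Tot, q ∈ X.filtT 1 ∧ ValidSeq K q.1 ∧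
        X.sCompT K q = (⟨n, x⟩ : X.Tot) := by
  constructor
  · rintro ⟨y, hy, rfl⟩
    exact ⟨⟨n - K.length, y⟩, hy, valid_sub hadm hlt h, (sFromTo_tot X K n h y).symm⟩
  · rintro ⟨q, hq1, hqv, hqe⟩
    have hq : q.1 + K.length = n := by
      have := congrArg Sigma.fst hqe
      simpa using this
    have hql : q.1 = n - K.length := by omega
    refine ⟨totAt q (n - K.length) hql, totAt_mem_filtS hq1 hql, ?_⟩
    apply tot_mk_inj (n := n)
    rw [sFromTo_tot X K n h, mk_totAt q _ hql, hqe]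

theorem mem_filtS_iff_tot {t n : ℕ} {x : X.X n} :
    x ∈ X.filtS t n ↔ (⟨n, x⟩ : X.Tot) ∈ X.filtT t := Iff.rfl

end SimplicialSpace

section MainConstruction

open SimplicialSpace

variable {n r : ℕ}

theorem admSeq_le (hr : r + 1 ≤ n) (J : AdmSeq r n) : J.val.length ≤ n := by
  rw [J.property.1]; omega

theorem admSeq_adm (J : AdmSeq r n) : Adm J.val := J.property.2.1

theorem admSeq_lt (J : AdmSeq r n) : ∀ a ∈ J.val, a < n := J.property.2.2

instance finite_admSeq (r b : ℕ) : Finite (AdmSeq r b) := by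
  have hinj : Function.Injective (fun J : AdmSeq r b => (fun k : Fin r =>
      (⟨J.val.get (Fin.cast J.property.1.symm k),
        J.property.2.2 _ (List.get_mem _ _)⟩ : Fin b))) := by
    intro J1 J2 h
    apply Subtype.ext
    apply List.ext_get (by rw [J1.property.1, J2.property.1])
    intro i h1 h2
    have := congrFun h ⟨i, by rw [← J1.property.1]; exact h1⟩
    simpa using congrArg Fin.val this
  exact Finite.of_injective _ hinj

variable {X : SimplicialSpace.{u}}

theorem sImage_filtS (J : AdmSeq r n) {x : X.X n} {h : J.val.length ≤ n}
    (hx : x ∈ X.sImage J.val n h) : x ∈ X.filtS r n := by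
  rw [mem_sImage_iff_tot (admSeq_adm J) (admSeq_lt J)] at hx
  have := imSeqT_subset_filtT hx
  rw [J.property.1] at this
  exact this

theorem sImage_deep (J : AdmSeq r n) {x : X.X n} {h : J.val.length ≤ n}
    (hxJ : x ∈ X.sImage J.val n h) (hd : x ∈ X.filtS (r + 1) n) :
    x ∈ X.sFromTo J.val n h '' X.filtS 1 (n - J.val.length) := by
  rw [mem_sImage_iff_tot (admSeq_adm J) (admSeq_lt J)] at hxJ
  obtain ⟨q, hqv, hqe⟩ := hxJ
  have hq1 : q ∈ X.filtT 1 := by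
    apply bottom_deg_of_filt (admSeq_adm J) q hqv
    rw [hqe]
    show (⟨n, x⟩ : X.Tot) ∈ X.filtT (J.val.length + 1)
    rw [J.property.1]
    exact hd
  exact (mem_image_filtS_iff (admSeq_adm J) (admSeq_lt J)).mpr ⟨q, hq1, hqv, hqe⟩

theorem deep_of_sImage_deg (J : AdmSeq r n) {x : X.X n} {h : J.val.length ≤ n}
    (hx : x ∈ X.sFromTo J.val n h '' X.filtS 1 (n - J.val.length)) :
    x ∈ X.filtS (r + 1) n := by
  rw [mem_image_filtS_iff (admSeq_adm J) (admSeq_lt J)] at hx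
  obtain ⟨q, hq1, hqv, hqe⟩ := hx
  have h2 := sCompT_mem_filtT hqv hq1
  rw [hqe] at h2
  show (⟨n, x⟩ : X.Tot) ∈ X.filtT (r + 1)
  have harith : 1 + J.val.length = r + 1 := by rw [J.property.1]; omega
  rwa [harith] at h2

/-- The underlying function of the homeomorphism `γ(n,r)`. -/
noncomputable def gammaFun (hr : r + 1 ≤ n) (X : SimplicialSpace.{u}) :
    (Wedge fun J : AdmSeq r n => X.sHat J.val n (admSeq_le hr J)).carrier →
      (X.filtQuot n r).carrier :=
  Wedge.lift
    (fun J => Collapse.lift _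
      (fun x => Collapse.mk _ ⟨x.1, sImage_filtS J x.2⟩)
      (X.filtQuot n r).pt
      (fun x hx => Collapse.mk_eq_pt (deep_of_sImage_deg J hx)))
    (X.filtQuot n r).pt
    (fun J => Collapse.lift_pt)

theorem gammaFun_mk (hr : r + 1 ≤ n) (X : SimplicialSpace.{u}) (J : AdmSeq r n)
    (z : ↥(X.sImage J.val n (admSeq_le hr J))) :
    gammaFun hr X (Wedge.mk _ J (Collapse.mk _ z)) =
      Collapse.mk _ (⟨z.1, sImage_filtS J z.2⟩ : ↥(X.filtS r n)) := rfl

theorem gammaFun_mk_pt (hr : r + 1 ≤ n) (X : SimplicialSpace.{u}) (J : AdmSeq r n) :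
    gammaFun hr X (Wedge.mk _ J (X.sHat J.val n (admSeq_le hr J)).pt) =
      (X.filtQuot n r).pt := rfl

theorem gammaFun_pt (hr : r + 1 ≤ n) (X : SimplicialSpace.{u}) :
    gammaFun hr X (Wedge _).pt = (X.filtQuot n r).pt := rfl

theorem continuous_gammaFun (hr : r + 1 ≤ n) (X : SimplicialSpace.{u}) :
    Continuous (gammaFun hr X) := by
  apply Wedge.continuous_lift
  intro J
  apply Collapse.continuous_lift
  exact Collapse.continuous_mk.comp
    (Continuous.subtype_mk continuous_subtype_val _)

theorem exists_admSeq {x : X.X n} (hx : x ∈ X.filtS r n) :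
    ∃ J : AdmSeq r n, (⟨n, x⟩ : X.Tot) ∈ X.imSeqT J.val := by
  obtain ⟨K, hKa, hKl, hKm⟩ := filtT_dest (mem_filtS_iff_tot.mp hx)
  obtain ⟨q, hqv, hqe⟩ := hKm
  have hlev : q.1 + K.length = n := by
    have := congrArg Sigma.fst hqe
    simpa using this
  refine ⟨⟨K, hKl, hKa, ?_⟩, q, hqv, hqe⟩
  intro a ha
  have := valid_entry_lt hqv a ha
  omega

open Classical in
/-- The underlying function of the inverse of `γ(n,r)`, on the filtration stage. -/
noncomputable def deltaFun0 (hr : r + 1 ≤ n) (X : SimplicialSpace.{u}) :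
    ↥(X.filtS r n) →
      (Wedge fun J : AdmSeq r n => X.sHat J.val n (admSeq_le hr J)).carrier :=
  fun x =>
    if hd : (x : X.X n) ∈ X.filtS (r + 1) n then
      (Wedge fun J : AdmSeq r n => X.sHat J.val n (admSeq_le hr J)).pt
    else
      Wedge.mk _ (Classical.choose (exists_admSeq x.2))
        (Collapse.mk _ ⟨x.1,
          (mem_sImage_iff_tot (admSeq_adm _) (admSeq_lt _)).mpr
            (Classical.choose_spec (exists_admSeq x.2))⟩)

theorem deltaFun0_deep (hr : r + 1 ≤ n) (X : SimplicialSpace.{u}) (x : ↥(X.filtS r n))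
    (hd : (x : X.X n) ∈ X.filtS (r + 1) n) :
    deltaFun0 hr X x =
      (Wedge fun J : AdmSeq r n => X.sHat J.val n (admSeq_le hr J)).pt := by
  unfold deltaFun0
  exact dif_pos hd

theorem deltaFun0_eq (hr : r + 1 ≤ n) (X : SimplicialSpace.{u}) (x : ↥(X.filtS r n))
    (J : AdmSeq r n) (hxJ : (x : X.X n) ∈ X.sImage J.val n (admSeq_le hr J)) :
    deltaFun0 hr X x = Wedge.mk _ J (Collapse.mk _ ⟨x.1, hxJ⟩) := by
  unfold deltaFun0
  split_ifs with hd
  · symm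
    rw [Collapse.mk_eq_pt (show _ ∈ {y : ↥(X.sImage J.val n (admSeq_le hr J)) |
        (y : X.X n) ∈ X.sFromTo J.val n (admSeq_le hr J) ''
          X.filtS 1 (n - J.val.length)} from sImage_deep J hxJ hd)]
    exact Wedge.mk_pt_eq_pt J
  · have hspec := Classical.choose_spec (exists_admSeq (x := (x : X.X n)) x.2)
    have hJeq : Classical.choose (exists_admSeq (x := (x : X.X n)) x.2) = J := by
      apply Subtype.ext
      apply imSeqT_uniq (admSeq_adm _) (admSeq_adm J)
        (by rw [(Classical.choose (exists_admSeq (x := (x : X.X n)) x.2)).property.1,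
                J.property.1])
        hspec ((mem_sImage_iff_tot (admSeq_adm J) (admSeq_lt J)).mp hxJ)
      rw [(Classical.choose (exists_admSeq (x := (x : X.X n)) x.2)).property.1]
      exact fun hc => hd hc
    cases hJeq
    rfl

/-- `S^r(Xₙ) ∩ s_J(X_{n-r})` is closed in `S^r(Xₙ)`. -/
theorem isClosed_SJ (hX : X.SimpliciallyNDR) (J : AdmSeq r n) (h : J.val.length ≤ n) :
    IsClosed {x : ↥(X.filtS r n) | (x : X.X n) ∈ X.sImage J.val n h} := by
  have heq : {x : ↥(X.filtS r n) | (x : X.X n) ∈ X.sImage J.val n h} =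
      ⋂ j ∈ J.val, {x : ↥(X.filtS r n) | (⟨n, (x : X.X n)⟩ : X.Tot) ∈ X.imDegT j} := by
    ext x
    simp only [Set.mem_setOf_eq, Set.mem_iInter]
    rw [mem_sImage_iff_tot (admSeq_adm J) (admSeq_lt J)]
    constructor
    · intro hx j hj
      exact mem_imDegT_of_mem (admSeq_adm J) hj hx
    · exact fun hx => mem_imSeqT_of_forall (admSeq_adm J) hx
  rw [heq]
  exact isClosed_biInter fun j hj => isClosed_imDegSub X hX n r j

theorem continuous_deltaFun0 (hr : r + 1 ≤ n) (X : SimplicialSpace.{u})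
    (hX : X.SimpliciallyNDR) : Continuous (deltaFun0 hr X) := by
  rw [continuous_iff_isClosed]
  intro C hC
  have hcover : deltaFun0 hr X ⁻¹' C =
      ⋃ J : AdmSeq r n, Subtype.val ''
        ((fun y : ↥{x : ↥(X.filtS r n) |
              (x : X.X n) ∈ X.sImage J.val n (admSeq_le hr J)} =>
            Wedge.mk _ J (Collapse.mk _ ⟨y.1.1, y.2⟩)) ⁻¹' C) := by
    ext x
    simp only [Set.mem_preimage, Set.mem_iUnion, Set.mem_image]
    constructor
    · intro hx
      obtain ⟨J, hJm⟩ := exists_admSeq x.2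
      have hxJ : (x : X.X n) ∈ X.sImage J.val n (admSeq_le hr J) :=
        (mem_sImage_iff_tot (admSeq_adm J) (admSeq_lt J)).mpr hJm
      refine ⟨J, ⟨x, hxJ⟩, ?_, rfl⟩
      show Wedge.mk _ J (Collapse.mk _ ⟨x.1, hxJ⟩) ∈ C
      rw [← deltaFun0_eq hr X x J hxJ]
      exact hx
    · rintro ⟨J, y, hyC, rfl⟩
      show deltaFun0 hr X y.1 ∈ C
      rw [deltaFun0_eq hr X y.1 J y.2]
      exact hyC
  rw [hcover]
  apply isClosed_iUnion_of_finite
  intro J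
  apply ((isClosed_SJ hX J (admSeq_le hr J)).isClosedEmbedding_subtypeVal).isClosedMap
  exact hC.preimage ((Wedge.continuous_mk J).comp
    (Collapse.continuous_mk.comp
      (Continuous.subtype_mk (continuous_subtype_val.comp continuous_subtype_val) _)))

/-- The inverse of `γ(n,r)`. -/
noncomputable def deltaFun (hr : r + 1 ≤ n) (X : SimplicialSpace.{u}) :
    (X.filtQuot n r).carrier →
      (Wedge fun J : AdmSeq r n => X.sHat J.val n (admSeq_le hr J)).carrier :=
  Collapse.lift _ (deltaFun0 hr X)
    (Wedge fun J : AdmSeq r n => X.sHat J.val n (admSeq_le hr J)).pt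
    (fun x hx => deltaFun0_deep hr X x hx)

theorem gamma_delta (hr : r + 1 ≤ n) (X : SimplicialSpace.{u}) :
    ∀ c, gammaFun hr X (deltaFun hr X c) = c := by
  intro c
  rcases Collapse.casesOn' c with ⟨z, rfl⟩ | rfl
  · show gammaFun hr X (deltaFun0 hr X z) = _
    by_cases hd : (z : X.X n) ∈ X.filtS (r + 1) n
    · rw [deltaFun0_deep hr X z hd, gammaFun_pt]
      exact (Collapse.mk_eq_pt
        (A := {y : ↥(X.filtS r n) | (y : X.X n) ∈ X.filtS (r + 1) n}) hd).symm
    · obtain ⟨J, hJm⟩ := exists_admSeq z.2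
      have hxJ : (z : X.X n) ∈ X.sImage J.val n (admSeq_le hr J) :=
        (mem_sImage_iff_tot (admSeq_adm J) (admSeq_lt J)).mpr hJm
      rw [deltaFun0_eq hr X z J hxJ, gammaFun_mk]
  · show gammaFun hr X (Wedge _).pt = _
    rw [gammaFun_pt]
    rfl

theorem delta_gamma (hr : r + 1 ≤ n) (X : SimplicialSpace.{u}) :
    ∀ w, deltaFun hr X (gammaFun hr X w) = w := by
  intro w
  rcases Wedge.casesOn' w with ⟨J, z, rfl⟩ | rfl
  · rcases Collapse.casesOn' z with ⟨y, rfl⟩ | rfl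
    · rw [gammaFun_mk hr X J y]
      show deltaFun0 hr X _ = _
      rw [deltaFun0_eq hr X _ J y.2]
    · exact (Wedge.mk_pt_eq_pt J).symm
  · show deltaFun hr X (gammaFun hr X _) = _
    rw [gammaFun_pt]
    rfl

/-- The homeomorphism `γ(n,r)`. -/
noncomputable def gammaHomeo (hr : r + 1 ≤ n) (X : SimplicialSpace.{u})
    (hX : X.SimpliciallyNDR) :
    (Wedge fun J : AdmSeq r n => X.sHat J.val n (admSeq_le hr J)).carrier ≃ₜ
      (X.filtQuot n r).carrier where
  toFun := gammaFun hr X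
  invFun := deltaFun hr X
  left_inv := delta_gamma hr X
  right_inv := gamma_delta hr X
  continuous_toFun := continuous_gammaFun hr X
  continuous_invFun :=
    Collapse.continuous_lift (hf := fun x hx => deltaFun0_deep hr X x hx)
      (continuous_deltaFun0 hr X hX)

theorem hom_sFromTo {X Y : SimplicialSpace.{u}} (f : X.Hom Y) (J : AdmSeq r n)
    (h : J.val.length ≤ n) (y : X.X (n - J.val.length)) :
    f.f n (X.sFromTo J.val n h y) =
      Y.sFromTo J.val n h (f.f (n - J.val.length) y) := by
  apply tot_mk_inj (X := Y) (n := n)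
  calc (show Y.Tot from ⟨n, f.f n (X.sFromTo J.val n h y)⟩)
      = f.fT (⟨n, X.sFromTo J.val n h y⟩ : X.Tot) := rfl
    _ = f.fT (X.sCompT J.val ⟨n - J.val.length, y⟩) := by rw [sFromTo_tot]
    _ = Y.sCompT J.val ⟨n - J.val.length, f.f _ y⟩ := by
          refine (f.fT_sCompT _ _ (valid_sub (admSeq_adm J) (admSeq_lt J) h)).trans ?_
          rfl
    _ = (show Y.Tot from ⟨n, Y.sFromTo J.val n h (f.f _ y)⟩) := (sFromTo_tot Y J.val n h _).symm

end MainConstruction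

open SimplicialSpace in
/-- Let `X•` be a simplicial space which is simplicially NDR.  Then
for `0 ≤ r ≤ n − 1` there is a homeomorphism
`γ(n,r) : ⋁_J ŝ_J(X_{n−r}) → S^r(X_n)/S^{r+1}(X_n)`, natural for morphisms of
simplicial spaces, where `J` ranges over the admissible sequences with `|J| = r`. -/
theorem wedge_sHat_homeomorphism (n r : ℕ) (hr : r + 1 ≤ n) :
    ∃ γ : ∀ (X : SimplicialSpace.{u}), X.SimpliciallyNDR →
        ((Wedge fun J : AdmSeq r n =>
            X.sHat J.val n (by rw [J.property.1]; omega)).carrier ≃ₜ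
          (X.filtQuot n r).carrier),
      ∀ (X Y : SimplicialSpace.{u}) (hX : X.SimpliciallyNDR) (hY : Y.SimpliciallyNDR)
        (f : X.Hom Y)
        (g : ∀ J : AdmSeq r n,
          (X.sHat J.val n (by rw [J.property.1]; omega)).carrier →
          (Y.sHat J.val n (by rw [J.property.1]; omega)).carrier)
        (W : (Wedge fun J : AdmSeq r n =>
                X.sHat J.val n (by rw [J.property.1]; omega)).carrier →
             (Wedge fun J : AdmSeq r n =>
                Y.sHat J.val n (by rw [J.property.1]; omega)).carrier)
        (gq : (X.filtQuot n r).carrier → (Y.filtQuot n r).carrier),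
        (∀ J : AdmSeq r n,
          SHatInduced f J.val n (by rw [J.property.1]; omega) (g J)) →
        WedgeInduced _ _ g W →
        FiltQuotInduced f n r gq →
        ∀ z, gq (γ X hX z) = γ Y hY (W z) := by
  refine ⟨fun X hX => gammaHomeo hr X hX, ?_⟩
  intro X Y hX hY f g W gq hg hW hgq z
  show gq (gammaFun hr X z) = gammaFun hr Y (W z)
  rcases Wedge.casesOn' z with ⟨J, c, rfl⟩ | rfl
  · rw [hW.1 J c]
    rcases Collapse.casesOn' c with ⟨y, rfl⟩ | rfl
    · -- main case: a point of the summand indexed by J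
      obtain ⟨y0, hy0⟩ := y.2
      have hyv : y = ⟨X.sFromTo J.val n (admSeq_le hr J) y0, Set.mem_range_self y0⟩ :=
        Subtype.ext hy0.symm
      have hfm : f.f n (y : X.X n) ∈ Y.filtS r n :=
        f.f_mem_filtS (sImage_filtS J y.2)
      have e1 : gq (gammaFun hr X (Wedge.mk _ J (Collapse.mk _ y))) =
          Collapse.mk _ (⟨f.f n (y : X.X n), hfm⟩ : ↥(Y.filtS r n)) := by
        rw [gammaFun_mk hr X J y]
        exact hgq.1 (y : X.X n) (sImage_filtS J y.2) hfm
      have e2 : g J (Collapse.mk _ y) =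
          Collapse.mk _ ⟨Y.sFromTo J.val n (admSeq_le hr J)
            (f.f (n - J.val.length) y0), Set.mem_range_self _⟩ := by
        rw [hyv]
        exact (hg J).1 y0
      rw [e1, e2, gammaFun_mk hr Y J]
      apply congrArg
      apply Subtype.ext
      show f.f n (y : X.X n) = Y.sFromTo J.val n (admSeq_le hr J) (f.f _ y0)
      rw [← hy0]
      exact hom_sFromTo f J (admSeq_le hr J) y0
    · -- basepoint of the summand
      show gq (gammaFun hr X (Wedge.mk _ J (X.sHat J.val n (admSeq_le hr J)).pt)) =
        gammaFun hr Y (Wedge.mk _ J (g J (X.sHat J.val n (admSeq_le hr J)).pt))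
      have e1 : gq (gammaFun hr X (Wedge.mk _ J
          (X.sHat J.val n (admSeq_le hr J)).pt)) = (Y.filtQuot n r).pt := by
        rw [gammaFun_mk_pt hr X J]
        exact hgq.2
      have e2 : g J (X.sHat J.val n (admSeq_le hr J)).pt =
          (Y.sHat J.val n (admSeq_le hr J)).pt := (hg J).2
      rw [e1, e2, gammaFun_mk_pt hr Y J]
  · -- basepoint of the wedge
    rw [hW.2, gammaFun_pt, gammaFun_pt]
    exact hgq.2
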